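/- Let G ↷ X be an action of a countably infinite group, let (x,y) ∈ IN_2(X,G) \ Δ_2(X), and let k ∈ ℕ. For 0 ≤ i ≤ k define μ_i = (i δ_x + (k−i) δ_y)/k ∈ 𝓜(X), where δ_x, δ_y denote the Dirac measures at x and y. Then (μ_0, μ_1, …, μ_k) ∈ IN_{k+1}(𝓜(X),G), the set of IN-tuples of length k+1 of the induced action G ↷ 𝓜(X). -/

import Mathlib

open Filter Set MeasureTheory Pointwise

section LocalEntropyDefs

variable {G X : Type*}

/-- `J ⊆ G` is an independence set for the tuple of sets `A` with respect to the action `a`. -/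
def IndepSetOn {k : ℕ} (a : G → X → X) (A : Fin k → Set X) (J : Set G) : Prop :=
  ∀ I : Finset G, ↑I ⊆ J → I.Nonempty → ∀ φ : G → Fin k,
    (⋂ s ∈ I, a s ⁻¹' A (φ s)).Nonempty

/-- The tuple of sets `A` has positive independence density with respect to the action `a`. -/
def PosIndepDensity {k : ℕ} (a : G → X → X) (A : Fin k → Set X) : Prop :=
  ∃ q : ℝ, 0 < q ∧ ∀ F : Finset G, F.Nonempty →
    ∃ J : Finset G, J ⊆ F ∧ q * (F.card : ℝ) ≤ (J.card : ℝ) ∧ IndepSetOn a A ↑J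

/-- IE-tuples (independence entropy tuples). -/
def IsIETuple [TopologicalSpace X] {k : ℕ} (a : G → X → X) (x : Fin k → X) : Prop :=
  ∀ U : Fin k → Set X, (∀ i, IsOpen (U i)) → (∀ i, x i ∈ U i) → PosIndepDensity a U

/-- IN-tuples. -/
def IsINTuple [TopologicalSpace X] {k : ℕ} (a : G → X → X) (x : Fin k → X) : Prop :=
  ∀ U : Fin k → Set X, (∀ i, IsOpen (U i)) → (∀ i, x i ∈ U i) →
    ∀ n : ℕ, ∃ J : Finset G, n ≤ J.card ∧ IndepSetOn a U ↑J

/-- IT-tuples. -/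
def IsITTuple [TopologicalSpace X] {k : ℕ} (a : G → X → X) (x : Fin k → X) : Prop :=
  ∀ U : Fin k → Set X, (∀ i, IsOpen (U i)) → (∀ i, x i ∈ U i) →
    ∃ J : Set G, J.Infinite ∧ IndepSetOn a U J

/-- A finite open cover of the space. -/
def IsFinOpenCover [TopologicalSpace X] (𝒰 : Set (Set X)) : Prop :=
  𝒰.Finite ∧ (∀ U ∈ 𝒰, IsOpen U) ∧ ⋃₀ 𝒰 = Set.univ

/-- Minimal cardinality of a subcover of the join `⋁_{g ∈ F} g⁻¹𝒰`. -/
noncomputable def coverNJoin (a : G → X → X) (F : Finset G) (𝒰 : Set (Set X)) : ℕ :=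
  sInf {m | ∃ s : Finset (G → Set X), (∀ f ∈ s, ∀ g ∈ F, f g ∈ 𝒰) ∧ s.card ≤ m ∧
    (⋃ f ∈ s, ⋂ g ∈ F, a g ⁻¹' f g) = Set.univ}

/-- Følner sequence. -/
def IsFolner (G : Type*) [Group G] (Fs : ℕ → Finset G) : Prop :=
  (∀ n, (Fs n).Nonempty) ∧ ∀ K : Finset G, ∀ δ : ℝ, 0 < δ →
    ∀ᶠ n in Filter.atTop,
      ((symmDiff ((K : Set G) * (Fs n : Set G)) ((Fs n : Set G))).ncard : ℝ)
        ≤ δ * ((Fs n).card : ℝ)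

/-- Entropy of a cover along a Følner sequence. -/
noncomputable def coverEntropyFolner (a : G → X → X) (Fs : ℕ → Finset G)
    (𝒰 : Set (Set X)) : ℝ :=
  Filter.atTop.limsup fun n => Real.log (coverNJoin a (Fs n) 𝒰) / ((Fs n).card : ℝ)

/-- Topological entropy of the action. -/
noncomputable def topEntropyFolner [TopologicalSpace X] (a : G → X → X)
    (Fs : ℕ → Finset G) : ENNReal :=
  ⨆ 𝒰 : {𝒰 : Set (Set X) // IsFinOpenCover 𝒰}, ENNReal.ofReal (coverEntropyFolner a Fs 𝒰.1)

/-- Naive entropy of the action with respect to a cover. -/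
noncomputable def naiveEntropyCover (a : G → X → X) (𝒰 : Set (Set X)) : ℝ :=
  ⨅ F : {F : Finset G // F.Nonempty}, Real.log (coverNJoin a F.1 𝒰) / ((F.1.card : ℝ))

/-- Naive topological entropy. -/
noncomputable def naiveEntropy [TopologicalSpace X] (a : G → X → X) : ENNReal :=
  ⨆ 𝒰 : {𝒰 : Set (Set X) // IsFinOpenCover 𝒰}, ENNReal.ofReal (naiveEntropyCover a 𝒰.1)

/-- Minimal cardinality of a subcover of `⋁_{i=1}^n (S i)⁻¹𝒰`. -/
noncomputable def coverNSeq (a : G → X → X) (S : ℕ → G) (n : ℕ) (𝒰 : Set (Set X)) : ℕ :=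
  sInf {m | ∃ s : Finset (ℕ → Set X), (∀ f ∈ s, ∀ i ∈ Finset.range n, f i ∈ 𝒰) ∧ s.card ≤ m ∧
    (⋃ f ∈ s, ⋂ i ∈ Finset.range n, a (S i) ⁻¹' f i) = Set.univ}

/-- Sequence entropy along `S` with respect to a cover. -/
noncomputable def seqEntropyCover (a : G → X → X) (S : ℕ → G) (𝒰 : Set (Set X)) : ℝ :=
  Filter.atTop.limsup fun n => Real.log (coverNSeq a S n 𝒰) / (n : ℝ)

/-- Supremum of sequence entropies `h*`. -/
noncomputable def seqEntropySup [TopologicalSpace X] (a : G → X → X) : ENNReal :=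
  ⨆ 𝒰 : {𝒰 : Set (Set X) // IsFinOpenCover 𝒰}, ⨆ S : ℕ → G,
    ENNReal.ofReal (seqEntropyCover a S 𝒰.1)

/-- Entropy tuple. -/
def IsEntropyTuple [TopologicalSpace X] {k : ℕ} (a : G → X → X) (Fs : ℕ → Finset G)
    (x : Fin k → X) : Prop :=
  ∀ l : ℕ, 2 ≤ l → ∀ K : Fin l → Set X, (∀ j, IsClosed (K j)) →
    (∀ j, ∃ i, K j ∈ nhds (x i)) →
    (∀ j j', j ≠ j' → Disjoint (K j) (K j')) →
    0 < coverEntropyFolner a Fs (Set.range fun j => (K j)ᶜ)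

/-- Sequence entropy tuple. -/
def IsSeqEntropyTuple [TopologicalSpace X] {k : ℕ} (a : G → X → X) (x : Fin k → X) : Prop :=
  ∀ l : ℕ, 2 ≤ l → ∀ K : Fin l → Set X, (∀ j, IsClosed (K j)) →
    (∀ j, ∃ i, K j ∈ nhds (x i)) →
    (∀ j j', j ≠ j' → Disjoint (K j) (K j')) →
    ∃ S : ℕ → G, 0 < seqEntropyCover a S (Set.range fun j => (K j)ᶜ)

/-- Tameness: the Ellis semigroup has cardinality at most continuum. -/
def IsTameAction [TopologicalSpace X] (a : G → X → X) : Prop :=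
  Cardinal.mk (closure (Set.range a) : Set (X → X)) ≤ Cardinal.continuum

end LocalEntropyDefs

/-- The probability measure `(i·δ_x + (k - i)·δ_y)/k`. -/
noncomputable def mixDirac {X : Type*} [MeasurableSpace X] (x y : X) (k : ℕ) (hk : k ≠ 0)
    (i : ℕ) (hik : i ≤ k) : MeasureTheory.ProbabilityMeasure X :=
  ⟨((i : ENNReal) / k) • MeasureTheory.Measure.dirac x
      + (((k - i : ℕ) : ENNReal) / k) • MeasureTheory.Measure.dirac y, by
    constructor
    simp only [MeasureTheory.Measure.add_apply, MeasureTheory.Measure.smul_apply,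
      smul_eq_mul, MeasureTheory.measure_univ, mul_one]
    rw [ENNReal.div_add_div_same, ← Nat.cast_add, Nat.add_sub_cancel' hik]
    exact ENNReal.div_self (by exact_mod_cast hk) (by simp)⟩

section AuxIN

open scoped ENNReal NNReal


variable {X : Type*} [MeasurableSpace X]

/-- The uniform average of Dirac measures at `z 0, …, z (k-1)`. -/
noncomputable def avgDirac (k : ℕ) (hk : k ≠ 0) (z : Fin k → X) :
    ProbabilityMeasure X :=
  ⟨(k : ℝ≥0∞)⁻¹ • ∑ i, MeasureTheory.Measure.dirac (z i), by
    constructor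
    simp only [MeasureTheory.Measure.smul_apply, MeasureTheory.Measure.finset_sum_apply,
      measure_univ, smul_eq_mul, Finset.sum_const, Finset.card_univ, Fintype.card_fin,
      nsmul_eq_mul, mul_one]
    exact ENNReal.inv_mul_cancel (by exact_mod_cast hk) (by simp)⟩

lemma avgDirac_toMeasure (k : ℕ) (hk : k ≠ 0) (z : Fin k → X) :
    (avgDirac k hk z : MeasureTheory.Measure X)
      = (k : ℝ≥0∞)⁻¹ • ∑ i, MeasureTheory.Measure.dirac (z i) := rfl

lemma continuous_avgDirac [TopologicalSpace X] [OpensMeasurableSpace X] (k : ℕ) (hk : k ≠ 0) :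
    Continuous (avgDirac (X := X) k hk) := by
  rw [continuous_iff_continuousAt]
  intro z
  unfold ContinuousAt
  rw [MeasureTheory.ProbabilityMeasure.tendsto_iff_forall_lintegral_tendsto]
  intro f
  have key : ∀ w : Fin k → X,
      ∫⁻ ω, (f ω : ℝ≥0∞) ∂(avgDirac k hk w : MeasureTheory.Measure X)
        = (k : ℝ≥0∞)⁻¹ * ∑ i, (f (w i) : ℝ≥0∞) := by
    intro w
    rw [avgDirac_toMeasure, lintegral_smul_measure, lintegral_finset_sum_measure]
    simp_rw [lintegral_dirac' _ (measurable_coe_nnreal_ennreal_iff.mpr f.continuous.measurable)]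
    rw [smul_eq_mul]
  simp_rw [key]
  exact ((ENNReal.continuous_const_mul (by simpa using hk)).comp
    (continuous_finset_sum _ fun i _ =>
      ENNReal.continuous_coe.comp (f.continuous.comp (continuous_apply i)))).tendsto z

lemma avgDirac_map [TopologicalSpace X] [BorelSpace X] (k : ℕ) (hk : k ≠ 0) (z : Fin k → X)
    {f : X → X} (hf : Measurable f)
    {hf' : AEMeasurable f (avgDirac k hk z : MeasureTheory.Measure X)} :
    (avgDirac k hk z).map hf' = avgDirac k hk fun i => f (z i) := by
  apply MeasureTheory.ProbabilityMeasure.toMeasure_injective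
  rw [MeasureTheory.ProbabilityMeasure.toMeasure_map, avgDirac_toMeasure, avgDirac_toMeasure]
  refine MeasureTheory.Measure.ext fun s hs => ?_
  rw [MeasureTheory.Measure.map_apply hf hs]
  simp only [MeasureTheory.Measure.smul_apply, MeasureTheory.Measure.finset_sum_apply,
    MeasureTheory.Measure.dirac_apply' _ hs, MeasureTheory.Measure.dirac_apply' _ (hf hs),
    smul_eq_mul]
  congr 1

lemma card_filter_fin_lt {k j : ℕ} (hj : j ≤ k) :
    (Finset.univ.filter fun i : Fin k => (i : ℕ) < j).card = j := by
  have h : (Finset.univ.filter fun i : Fin k => (i : ℕ) < j) =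
      (Finset.range j).attachFin
        (fun m hm => lt_of_lt_of_le (Finset.mem_range.mp hm) hj) := by
    ext i
    simp [Finset.mem_attachFin]
  rw [h, Finset.card_attachFin, Finset.card_range]


lemma mixDirac_eq_avgDirac {X : Type*} [MeasurableSpace X] (x y : X) (k : ℕ) (hk : k ≠ 0)
    (j : ℕ) (hj : j ≤ k) :
    mixDirac x y k hk j hj = avgDirac k hk fun i : Fin k => if (i : ℕ) < j then x else y := by
  apply MeasureTheory.ProbabilityMeasure.toMeasure_injective
  show ((j : ℝ≥0∞) / k) • MeasureTheory.Measure.dirac x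
      + (((k - j : ℕ) : ℝ≥0∞) / k) • MeasureTheory.Measure.dirac y
    = (k : ℝ≥0∞)⁻¹ • ∑ i : Fin k, MeasureTheory.Measure.dirac (if (i : ℕ) < j then x else y)
  have hcard : (Finset.univ.filter fun i : Fin k => ¬ (i : ℕ) < j).card = k - j := by
    have h := Finset.card_filter_add_card_filter_not
      (s := (Finset.univ : Finset (Fin k))) (p := fun i : Fin k => (i : ℕ) < j)
    rw [card_filter_fin_lt hj, Finset.card_univ, Fintype.card_fin] at h
    omega
  simp_rw [apply_ite MeasureTheory.Measure.dirac]
  rw [Finset.sum_ite, Finset.sum_const, Finset.sum_const, card_filter_fin_lt hj, hcard,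
    ← Nat.cast_smul_eq_nsmul ℝ≥0∞, ← Nat.cast_smul_eq_nsmul ℝ≥0∞, smul_add, smul_smul,
    smul_smul, ← ENNReal.div_eq_inv_mul, ← ENNReal.div_eq_inv_mul]

end AuxIN

/-- If `(x,y)` is a non-diagonal IN-pair then the convex combinations
`μ_i = (i·δ_x + (k-i)·δ_y)/k`, `0 ≤ i ≤ k`, form an IN-tuple of length `k+1` of the
induced action on the space of Borel probability measures. -/
theorem dirac_combinations_IN_tuple
    {G X : Type*} [Group G] [Countable G] [Infinite G]
    [TopologicalSpace X] [CompactSpace X] [TopologicalSpace.MetrizableSpace X] [Nonempty X]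
    [MeasurableSpace X] [BorelSpace X]
    [MulAction G X] [ContinuousConstSMul G X]
    (x y : X) (hxy : x ≠ y)
    (hIN : IsINTuple (fun (g : G) (w : X) => g • w) fun i : Fin 2 => if i = 0 then x else y)
    (k : ℕ) (hk : k ≠ 0) :
    IsINTuple (fun (g : G) (μ : MeasureTheory.ProbabilityMeasure X) =>
        μ.map (continuous_const_smul g).measurable.aemeasurable)
      fun j : Fin (k + 1) => mixDirac x y k hk j.1 (Nat.lt_succ_iff.mp j.2) := by
  intro U hUo hUm n
  have hΦ : Continuous (avgDirac (X := X) k hk) := continuous_avgDirac k hk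
  have hpU : ∀ j : Fin (k + 1),
      avgDirac k hk (fun i : Fin k => if (i : ℕ) < (j : ℕ) then x else y) ∈ U j := by
    intro j
    rw [← mixDirac_eq_avgDirac x y k hk j.1 (Nat.lt_succ_iff.mp j.2)]
    exact hUm j
  have hbox : ∀ j : Fin (k + 1), ∃ V : Fin k → Set X,
      (∀ i, IsOpen (V i) ∧ (if (i : ℕ) < (j : ℕ) then x else y) ∈ V i) ∧
        Set.univ.pi V ⊆ avgDirac k hk ⁻¹' U j :=
    fun j => isOpen_pi_iff'.mp ((hUo j).preimage hΦ) _ (hpU j)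
  choose V hV hVsub using hbox
  set W : Fin 2 → Set X := fun b =>
    if b = 0 then ⋂ (j : Fin (k + 1)) (i : Fin k) (_ : (i : ℕ) < (j : ℕ)), V j i
    else ⋂ (j : Fin (k + 1)) (i : Fin k) (_ : ¬ (i : ℕ) < (j : ℕ)), V j i with hW
  have hWopen : ∀ b, IsOpen (W b) := by
    intro b
    simp only [hW]
    split
    · exact isOpen_iInter_of_finite fun j => isOpen_iInter_of_finite fun i =>
        isOpen_iInter_of_finite fun _ => (hV j i).1
    · exact isOpen_iInter_of_finite fun j => isOpen_iInter_of_finite fun i =>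
        isOpen_iInter_of_finite fun _ => (hV j i).1
  have hWx : x ∈ W 0 := by
    simp only [hW, if_pos rfl]
    exact Set.mem_iInter.mpr fun j => Set.mem_iInter.mpr fun i =>
      Set.mem_iInter.mpr fun hij => by
        have h := (hV j i).2; rwa [if_pos hij] at h
  have hWy : y ∈ W 1 := by
    have h1 : ((1 : Fin 2) = 0) = False := by norm_num
    simp only [hW, h1, if_false]
    exact Set.mem_iInter.mpr fun j => Set.mem_iInter.mpr fun i =>
      Set.mem_iInter.mpr fun hij => by
        have h := (hV j i).2; rwa [if_neg hij] at h
  have hWmem : ∀ b : Fin 2, (if b = 0 then x else y) ∈ W b := by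
    intro b
    fin_cases b
    · simpa using hWx
    · simpa using hWy
  obtain ⟨J, hJn, hJ⟩ := hIN W hWopen hWmem n
  refine ⟨J, hJn, ?_⟩
  intro I hI hne ψ
  have hex : ∀ i : Fin k, ∃ w : X, ∀ s ∈ I,
      s • w ∈ W (if (i : ℕ) < (ψ s : ℕ) then 0 else 1) := by
    intro i
    obtain ⟨w, hw⟩ := hJ I hI hne fun s => if (i : ℕ) < (ψ s : ℕ) then 0 else 1
    exact ⟨w, fun s hs => by simpa using Set.mem_iInter₂.mp hw s hs⟩
  choose z hz using hex
  refine ⟨avgDirac k hk z, Set.mem_iInter₂.mpr fun s hs => ?_⟩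
  simp only [Set.mem_preimage]
  rw [avgDirac_map k hk z (continuous_const_smul s).measurable]
  refine hVsub (ψ s) (Set.mem_univ_pi.mpr fun i => ?_)
  have h := hz i s hs
  by_cases hlt : (i : ℕ) < (ψ s : ℕ)
  · rw [if_pos hlt] at h
    simp only [hW, if_pos rfl] at h
    exact Set.mem_iInter.mp (Set.mem_iInter.mp (Set.mem_iInter.mp h (ψ s)) i) hlt
  · rw [if_neg hlt] at h
    have h1 : ((1 : Fin 2) = 0) = False := by norm_num
    simp only [hW, h1, if_false] at h
    exact Set.mem_iInter.mp (Set.mem_iInter.mp (Set.mem_iInter.mp h (ψ s)) i) hlt
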